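/- Let 1 ≤ p < ∞ with conjugate exponent q = p/(p-1) (q = ∞ when p = 1), let d ≥ 1, set φ(z) = z_1 + ⋯ + z_d on 𝕋^d, and define ψ(z) = d · ‖φ‖_{L^p(𝕋^d)}^{-p} · |φ(z)|^{p-2} φ(z). Then ‖ψ‖_{L^q(𝕋^d)} = d / ‖φ‖_{L^p(𝕋^d)}, and ψ has minimal L^q norm among all functions with the same analytic Fourier coefficients: if ψ' ∈ L^q(𝕋^d) satisfies ∫_{𝕋^d} ψ'(z) · conj(z_1^{α_1} ⋯ z_d^{α_d}) dμ_d(z) = 1 when α is a standard unit vector e_j and = 0 for every other α ∈ ℕ₀^d, then ‖ψ‖_{L^q(𝕋^d)} ≤ ‖ψ'‖_{L^q(𝕋^d)}. -/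

import Mathlib

open MeasureTheory Complex Filter
open scoped ENNReal NNReal

noncomputable instance : MeasurableSpace Circle := borel Circle
instance : BorelSpace Circle := ⟨rfl⟩

/-- The normalized Lebesgue arc measure on the unit circle, i.e. its Haar probability
measure. -/
noncomputable def muCircle : Measure Circle := Measure.haarMeasure ⊤

instance : IsProbabilityMeasure muCircle :=
  ⟨by simpa [muCircle] using
    Measure.haarMeasure_self (K₀ := (⊤ : TopologicalSpace.PositiveCompacts Circle))⟩

/-- The probability measure `μ_d` on `𝕋^d`: the product of normalized Lebesgue arc
measures. -/
noncomputable def muD (d : ℕ) : Measure (Fin d → Circle) := Measure.pi fun _ => muCircle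

/-- `φ(z) = z_1 + ⋯ + z_d` on `𝕋^d`. -/
noncomputable def phiD (d : ℕ) : (Fin d → Circle) → ℂ := fun z => ∑ j, (z j : ℂ)

/-- The `L^p(𝕋^d)` norm of `φ`. -/
noncomputable def phiNorm (p : ℝ) (d : ℕ) : ℝ :=
  (∫ z : Fin d → Circle, ‖phiD d z‖ ^ p ∂muD d) ^ (1 / p)

/-- The extremal function `ψ(z) = d ‖φ‖_p^{-p} |φ(z)|^{p-2} φ(z)`. -/
noncomputable def psiFn (p : ℝ) (d : ℕ) : (Fin d → Circle) → ℂ := fun z =>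
  ((d * (phiNorm p d) ^ (-p) : ℝ) : ℂ) * ((‖phiD d z‖ ^ (p - 2) : ℝ) : ℂ) * phiD d z

namespace PsiAux

instance : Measure.IsMulLeftInvariant muCircle := by
  unfold muCircle; infer_instance

instance (d : ℕ) : Measure.IsMulLeftInvariant (muD d) := by
  unfold muD; infer_instance

instance (d : ℕ) : IsProbabilityMeasure (muD d) := by
  unfold muD; infer_instance

variable {d : ℕ}

lemma continuous_phiD : Continuous (phiD d) :=
  continuous_finset_sum _ fun j _ => continuous_induced_dom.comp (continuous_apply j)

lemma measurable_phiD : Measurable (phiD d) := continuous_phiD.measurable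

lemma aesm_phiD : AEStronglyMeasurable (phiD d) (muD d) :=
  measurable_phiD.aestronglyMeasurable

lemma norm_phiD_le (z : Fin d → Circle) : ‖phiD d z‖ ≤ d := by
  refine le_trans (norm_sum_le _ _) ?_
  have : ∀ j : Fin d, ‖(z j : ℂ)‖ = 1 := fun j => by
    simpa using Circle.norm_coe (z j)
  simp [this]

lemma integrable_of_bound {f : (Fin d → Circle) → ℂ} (hm : AEStronglyMeasurable f (muD d))
    (C : ℝ) (h : ∀ z, ‖f z‖ ≤ C) : Integrable f (muD d) :=
  memLp_one_iff_integrable.mp (MemLp.of_bound hm C (.of_forall h))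

lemma integrable_of_bound_real {f : (Fin d → Circle) → ℝ} (hm : AEStronglyMeasurable f (muD d))
    (C : ℝ) (h : ∀ z, ‖f z‖ ≤ C) : Integrable f (muD d) :=
  memLp_one_iff_integrable.mp (MemLp.of_bound hm C (.of_forall h))

lemma measurable_rpow_norm_phiD (r : ℝ) : Measurable (fun z => ‖phiD d z‖ ^ r) :=
  (measurable_phiD.norm).pow_const r

lemma integrable_rpow_norm_phiD {r : ℝ} (hr : 0 ≤ r) :
    Integrable (fun z => ‖phiD d z‖ ^ r) (muD d) := by
  refine integrable_of_bound_real (measurable_rpow_norm_phiD r).aestronglyMeasurable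
    ((d : ℝ) ^ r) fun z => ?_
  rw [Real.norm_eq_abs, _root_.abs_of_nonneg (Real.rpow_nonneg (norm_nonneg _) r)]
  exact Real.rpow_le_rpow (norm_nonneg _) (norm_phiD_le z) hr

/-- `∫ z_j conj z_k = 0` for `j ≠ k`, via translation invariance. -/
lemma integral_coord_mul_conj_ne {j k : Fin d} (hjk : j ≠ k) :
    ∫ z : Fin d → Circle, (z j : ℂ) * (starRingEnd ℂ) (z k : ℂ) ∂muD d = 0 := by
  set f : (Fin d → Circle) → ℂ := fun z => (z j : ℂ) * (starRingEnd ℂ) (z k : ℂ) with hf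
  set g : Fin d → Circle := Function.update (1 : Fin d → Circle) j (Circle.exp Real.pi) with hg
  have hgj : (g j : ℂ) = -1 := by
    rw [hg, Function.update_self, Circle.coe_exp]
    simpa using Complex.exp_pi_mul_I
  have hgk : g k = 1 := by rw [hg, Function.update_of_ne (Ne.symm hjk)]; rfl
  have key : ∫ z, f (g * z) ∂muD d = ∫ z, f z ∂muD d :=
    integral_mul_left_eq_self f g
  have : ∀ z, f (g * z) = - f z := by
    intro z
    have h1 : ((g * z) j : ℂ) = -(z j : ℂ) := by
      rw [Pi.mul_apply, Circle.coe_mul, hgj]; ring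
    have h2 : ((g * z) k : ℂ) = (z k : ℂ) := by
      rw [Pi.mul_apply, hgk, one_mul]
    simp only [hf, h1, h2]; ring
  rw [integral_congr_ae (Eventually.of_forall this), integral_neg] at key
  linear_combination -key / 2

lemma integral_coord_mul_conj (j k : Fin d) :
    ∫ z : Fin d → Circle, (z j : ℂ) * (starRingEnd ℂ) (z k : ℂ) ∂muD d
      = if j = k then 1 else 0 := by
  rcases eq_or_ne j k with h | h
  · subst h
    have : ∀ z : Fin d → Circle, (z j : ℂ) * (starRingEnd ℂ) (z j : ℂ) = 1 := fun z => by
      rw [Complex.mul_conj, Circle.normSq_coe, Complex.ofReal_one]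
    rw [integral_congr_ae (Eventually.of_forall this)]
    simp
  · rw [integral_coord_mul_conj_ne h]
    simp [h]

lemma integrable_coord_mul_conj (j k : Fin d) :
    Integrable (fun z : Fin d → Circle => (z j : ℂ) * (starRingEnd ℂ) (z k : ℂ)) (muD d) := by
  refine integrable_of_bound ?_ 1 fun z => ?_
  · exact ((continuous_induced_dom.comp (continuous_apply j)).mul
      (Complex.continuous_conj.comp
        (continuous_induced_dom.comp (continuous_apply k)))).measurable.aestronglyMeasurable
  · have h1 : ‖(z j : ℂ)‖ = 1 := by simpa using Circle.norm_coe (z j)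
    have h2 : ‖(z k : ℂ)‖ = 1 := by simpa using Circle.norm_coe (z k)
    rw [norm_mul, h1, RCLike.norm_conj, h2, one_mul]

lemma integral_phiD_mul_conj (k : Fin d) :
    ∫ z : Fin d → Circle, phiD d z * (starRingEnd ℂ) (z k : ℂ) ∂muD d = 1 := by
  have : ∀ z : Fin d → Circle, phiD d z * (starRingEnd ℂ) (z k : ℂ)
      = ∑ j, (z j : ℂ) * (starRingEnd ℂ) (z k : ℂ) := fun z => by
    rw [phiD, Finset.sum_mul]
  rw [integral_congr_ae (Eventually.of_forall this),
    integral_finset_sum _ fun j _ => integrable_coord_mul_conj j k]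
  simp [integral_coord_mul_conj]

variable {p : ℝ}

lemma integral_rpow_pos (hp : 1 ≤ p) (hd : 1 ≤ d) :
    0 < ∫ z, ‖phiD d z‖ ^ p ∂muD d := by
  have hp0 : p ≠ 0 := by linarith
  have hint := integrable_rpow_norm_phiD (d := d) (r := p) (by linarith)
  have hnn : 0 ≤ ∫ z, ‖phiD d z‖ ^ p ∂muD d :=
    integral_nonneg fun z => Real.rpow_nonneg (norm_nonneg _) p
  rcases hnn.lt_or_eq with h | h
  · exact h
  exfalso
  have hzero : (fun z => ‖phiD d z‖ ^ p) =ᵐ[muD d] 0 :=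
    (integral_eq_zero_iff_of_nonneg (fun z => Real.rpow_nonneg (norm_nonneg _) p) hint).mp h.symm
  have hphi0 : phiD d =ᵐ[muD d] 0 := by
    filter_upwards [hzero] with z hz
    have : ‖phiD d z‖ = 0 := by
      by_contra hne
      have hpos : 0 < ‖phiD d z‖ := lt_of_le_of_ne (norm_nonneg _) (Ne.symm hne)
      exact absurd hz (ne_of_gt (Real.rpow_pos_of_pos hpos p))
    simpa using norm_eq_zero.mp this
  obtain ⟨k⟩ : Nonempty (Fin d) := ⟨⟨0, hd⟩⟩
  have h1 := integral_phiD_mul_conj (d := d) k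
  have : ∫ z : Fin d → Circle, phiD d z * (starRingEnd ℂ) (z k : ℂ) ∂muD d = 0 := by
    refine integral_eq_zero_of_ae ?_
    filter_upwards [hphi0] with z hz
    simp [hz]
  rw [this] at h1
  exact zero_ne_one h1

lemma phiNorm_pos (hp : 1 ≤ p) (hd : 1 ≤ d) : 0 < phiNorm p d :=
  Real.rpow_pos_of_pos (integral_rpow_pos hp hd) _

lemma phiNorm_rpow (hp : 1 ≤ p) (hd : 1 ≤ d) :
    phiNorm p d ^ p = ∫ z, ‖phiD d z‖ ^ p ∂muD d := by
  have hp0 : p ≠ 0 := by linarith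
  rw [phiNorm, ← Real.rpow_mul
    (integral_nonneg fun z => Real.rpow_nonneg (norm_nonneg _) p), one_div,
    inv_mul_cancel₀ hp0, Real.rpow_one]

lemma eLpNorm_phiD_eq (hp : 1 ≤ p) (hd : 1 ≤ d) :
    eLpNorm (phiD d) (ENNReal.ofReal p) (muD d) = ENNReal.ofReal (phiNorm p d) := by
  have hp0 : (0:ℝ) < p := by linarith
  have hP0 : ENNReal.ofReal p ≠ 0 := by simp [ENNReal.ofReal_eq_zero]; linarith
  have hPt : ENNReal.ofReal p ≠ ∞ := ENNReal.ofReal_ne_top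
  rw [eLpNorm_eq_lintegral_rpow_enorm_toReal hP0 hPt, ENNReal.toReal_ofReal hp0.le]
  have h1 : ∀ z : Fin d → Circle, ‖phiD d z‖ₑ ^ p
      = ENNReal.ofReal (‖phiD d z‖ ^ p) := fun z => by
    rw [← ofReal_norm, ENNReal.ofReal_rpow_of_nonneg (norm_nonneg _) hp0.le]
  simp_rw [h1]
  rw [← ofReal_integral_eq_lintegral_ofReal (integrable_rpow_norm_phiD hp0.le)
    (Eventually.of_forall fun z => Real.rpow_nonneg (norm_nonneg _) p),
    ENNReal.ofReal_rpow_of_nonneg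
      (integral_nonneg fun z => Real.rpow_nonneg (norm_nonneg _) p) (by positivity)]
  rfl

lemma eLpNorm_conj_phiD (r : ℝ≥0∞) :
    eLpNorm (fun z => (starRingEnd ℂ) (phiD d z)) r (muD d) = eLpNorm (phiD d) r (muD d) := by
  apply eLpNorm_congr_norm_ae
  filter_upwards with z
  simp

/-- Hölder lower bound: any `F` pairing to `d` against `conj φ` has `L^q` norm at least
`d / ‖φ‖_p`. -/
lemma lower_bound (hp : 1 ≤ p) (hd : 1 ≤ d) {q : ℝ≥0∞}
    (hq : (ENNReal.ofReal p)⁻¹ + q⁻¹ = 1) {F : (Fin d → Circle) → ℂ}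
    (hF : AEStronglyMeasurable F (muD d))
    (hpair : ∫ z, F z * (starRingEnd ℂ) (phiD d z) ∂muD d = (d : ℂ)) :
    ENNReal.ofReal (d / phiNorm p d) ≤ eLpNorm F q (muD d) := by
  have hcm : AEStronglyMeasurable (fun z => (starRingEnd ℂ) (phiD d z)) (muD d) :=
    (Complex.continuous_conj.comp continuous_phiD).measurable.aestronglyMeasurable
  have h1 : ENNReal.ofReal d ≤ eLpNorm (fun z => F z * (starRingEnd ℂ) (phiD d z)) 1 (muD d) := by
    rw [eLpNorm_one_eq_lintegral_enorm]
    calc ENNReal.ofReal (d : ℝ) = (‖((d : ℕ) : ℂ)‖₊ : ℝ≥0∞) := by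
          simp [← ofReal_norm]
      _ = (‖∫ z, F z * (starRingEnd ℂ) (phiD d z) ∂muD d‖₊ : ℝ≥0∞) := by rw [hpair]
      _ ≤ _ := enorm_integral_le_lintegral_enorm _
  have h2 : eLpNorm (fun z => F z * (starRingEnd ℂ) (phiD d z)) 1 (muD d)
      ≤ eLpNorm (fun z => (starRingEnd ℂ) (phiD d z)) (ENNReal.ofReal p) (muD d)
        * eLpNorm F q (muD d) := by
    haveI : ENNReal.HolderTriple (ENNReal.ofReal p) q 1 := ⟨by rw [inv_one, hq]⟩
    have := eLpNorm_smul_le_mul_eLpNorm (μ := muD d) (p := ENNReal.ofReal p) (q := q) (r := 1)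
      hF hcm
    refine le_trans (le_of_eq ?_) this
    apply eLpNorm_congr_ae
    filter_upwards with z
    simp [mul_comm]
  rw [eLpNorm_conj_phiD, eLpNorm_phiD_eq hp hd] at h2
  have h3 : ENNReal.ofReal d ≤ eLpNorm F q (muD d) * ENNReal.ofReal (phiNorm p d) :=
    le_trans h1 (h2.trans_eq (mul_comm _ _))
  have h4 := ENNReal.div_le_of_le_mul h3
  rwa [← ENNReal.ofReal_div_of_pos (phiNorm_pos hp hd)] at h4

lemma aesm_psiFn : AEStronglyMeasurable (psiFn p d) (muD d) := by
  unfold psiFn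
  exact ((measurable_const.mul
    (Complex.measurable_ofReal.comp ((measurable_phiD.norm).pow_const (p - 2)))).mul
      measurable_phiD).aestronglyMeasurable

lemma pair_psi (hp : 1 ≤ p) (hd : 1 ≤ d) :
    ∫ z, psiFn p d z * (starRingEnd ℂ) (phiD d z) ∂muD d = (d : ℂ) := by
  have hpne : p - 2 + 2 ≠ 0 := fun h0 => by simp at h0; linarith
  set c : ℝ := (d : ℝ) * phiNorm p d ^ (-p) with hc
  have step : ∀ z, psiFn p d z * (starRingEnd ℂ) (phiD d z)
      = ((c * ‖phiD d z‖ ^ p : ℝ) : ℂ) := by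
    intro z
    have hmc : phiD d z * (starRingEnd ℂ) (phiD d z) = ((‖phiD d z‖ ^ (2:ℝ) : ℝ) : ℂ) := by
      rw [Complex.mul_conj]
      norm_cast
      rw [Complex.normSq_eq_norm_sq, ← Real.rpow_natCast]
    calc psiFn p d z * (starRingEnd ℂ) (phiD d z)
        = ((c : ℝ) : ℂ) * ((‖phiD d z‖ ^ (p - 2) : ℝ) : ℂ)
          * (phiD d z * (starRingEnd ℂ) (phiD d z)) := by rw [psiFn]; ring
      _ = ((c * (‖phiD d z‖ ^ (p - 2) * ‖phiD d z‖ ^ (2:ℝ)) : ℝ) : ℂ) := by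
          rw [hmc]; push_cast; ring
      _ = ((c * ‖phiD d z‖ ^ p : ℝ) : ℂ) := by
          rw [← Real.rpow_add' (norm_nonneg _) hpne]
          norm_num
  simp_rw [step]
  have hio : ∫ z, ((c * ‖phiD d z‖ ^ p : ℝ) : ℂ) ∂muD d
      = ((∫ z, c * ‖phiD d z‖ ^ p ∂muD d : ℝ) : ℂ) := integral_ofReal
  rw [hio, integral_const_mul]
  have hI : phiNorm p d ^ (-p) * ∫ z, ‖phiD d z‖ ^ p ∂muD d = 1 := by
    rw [← phiNorm_rpow hp hd, ← Real.rpow_add (phiNorm_pos hp hd), neg_add_cancel,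
      Real.rpow_zero]
  rw [hc, mul_assoc, hI, mul_one]
  norm_num

lemma norm_psiFn (hp : 1 ≤ p) (hd : 1 ≤ d) (z : Fin d → Circle) :
    ‖psiFn p d z‖ = (d : ℝ) * phiNorm p d ^ (-p) * (‖phiD d z‖ ^ (p - 2) * ‖phiD d z‖) := by
  have hc : (0:ℝ) ≤ (d : ℝ) * phiNorm p d ^ (-p) :=
    mul_nonneg (Nat.cast_nonneg _) (Real.rpow_nonneg (phiNorm_pos hp hd).le _)
  rw [psiFn, norm_mul, norm_mul, Complex.norm_real, Complex.norm_real, Real.norm_eq_abs,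
    Real.norm_eq_abs, _root_.abs_of_nonneg hc,
    _root_.abs_of_nonneg (Real.rpow_nonneg (norm_nonneg _) _), mul_assoc]

lemma q_top_of_p_one (hp1 : p = 1) {q : ℝ≥0∞} (hq : (ENNReal.ofReal p)⁻¹ + q⁻¹ = 1) :
    q = ∞ := by
  subst hp1
  rw [ENNReal.ofReal_one, inv_one, add_comm] at hq
  have h0 : q⁻¹ = 1 - 1 := ENNReal.eq_sub_of_add_eq ENNReal.one_ne_top hq
  rw [tsub_self] at h0
  exact ENNReal.inv_eq_zero.mp h0

lemma q_eq_of_p_gt (hp1 : 1 < p) {q : ℝ≥0∞} (hq : (ENNReal.ofReal p)⁻¹ + q⁻¹ = 1) :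
    q = ENNReal.ofReal (p / (p - 1)) := by
  have hp0 : (0:ℝ) < p := by linarith
  have hinv : p⁻¹ < 1 := by
    rw [inv_lt_one_iff₀]; right; exact hp1
  have hP0 : ENNReal.ofReal p ≠ 0 := by simp [ENNReal.ofReal_eq_zero]; linarith
  rw [add_comm] at hq
  have h2 : q⁻¹ = 1 - (ENNReal.ofReal p)⁻¹ :=
    ENNReal.eq_sub_of_add_eq (ENNReal.inv_ne_top.mpr hP0) hq
  rw [← ENNReal.ofReal_inv_of_pos hp0, ← ENNReal.ofReal_one,
    ← ENNReal.ofReal_sub _ (by positivity)] at h2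
  have h3 : q = (ENNReal.ofReal (1 - p⁻¹))⁻¹ := by
    rw [← h2, inv_inv]
  rw [h3, ← ENNReal.ofReal_inv_of_pos (by linarith)]
  congr 1
  rw [show (1 : ℝ) - p⁻¹ = (p - 1) / p by field_simp, inv_div]

lemma upper_top (hp1 : p = 1) (hd : 1 ≤ d) :
    eLpNorm (psiFn p d) ∞ (muD d) ≤ ENNReal.ofReal ((d : ℝ) / phiNorm p d) := by
  have hp : 1 ≤ p := hp1.ge
  have hbd : ∀ z, ‖psiFn p d z‖ ≤ (d : ℝ) / phiNorm p d := by
    intro z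
    rw [norm_psiFn hp hd]
    have h1 : ‖phiD d z‖ ^ (p - 2) * ‖phiD d z‖ ≤ 1 := by
      subst hp1
      rw [show (1:ℝ) - 2 = -1 by norm_num, Real.rpow_neg_one]
      rcases eq_or_lt_of_le (norm_nonneg (phiD d z)) with h | h
      · rw [← h]
        norm_num
      · rw [inv_mul_cancel₀ (ne_of_gt h)]
    calc (d : ℝ) * phiNorm p d ^ (-p) * (‖phiD d z‖ ^ (p - 2) * ‖phiD d z‖)
        ≤ (d : ℝ) * phiNorm p d ^ (-p) * 1 :=
          mul_le_mul_of_nonneg_left h1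
            (mul_nonneg (Nat.cast_nonneg _) (Real.rpow_nonneg (phiNorm_pos hp hd).le _))
      _ = (d : ℝ) / phiNorm p d := by
          subst hp1
          rw [mul_one, Real.rpow_neg_one, div_eq_mul_inv]
  refine le_trans (eLpNorm_le_of_ae_bound (Eventually.of_forall hbd)) ?_
  simp [measure_univ]

lemma eLpNorm_psi_eq_of_gt (hp1 : 1 < p) (hd : 1 ≤ d) :
    eLpNorm (psiFn p d) (ENNReal.ofReal (p / (p - 1))) (muD d)
      = ENNReal.ofReal ((d : ℝ) / phiNorm p d) := by
  have hp : 1 ≤ p := hp1.le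
  have hp0 : (0:ℝ) < p := by linarith
  set c : ℝ := (d : ℝ) * phiNorm p d ^ (-p) with hc
  have hc0 : 0 ≤ c := mul_nonneg (Nat.cast_nonneg _) (Real.rpow_nonneg (phiNorm_pos hp hd).le _)
  set qr : ℝ := p / (p - 1) with hqr
  have hqr0 : (0:ℝ) < qr := by
    apply div_pos hp0; linarith
  have hQ0 : ENNReal.ofReal qr ≠ 0 := by simp [ENNReal.ofReal_eq_zero]; linarith
  have hQt : ENNReal.ofReal qr ≠ ∞ := ENNReal.ofReal_ne_top
  have hne1 : p - 1 ≠ 0 := by intro h0; linarith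
  have hmul : (p - 1) * qr = p := by
    rw [hqr, mul_comm, div_mul_cancel₀ _ hne1]
  rw [eLpNorm_eq_lintegral_rpow_enorm_toReal hQ0 hQt, ENNReal.toReal_ofReal hqr0.le]
  have hnorm : ∀ z, ‖psiFn p d z‖ = c * ‖phiD d z‖ ^ (p - 1) := by
    intro z
    rw [norm_psiFn hp hd, ← hc]
    congr 1
    nth_rewrite 2 [← Real.rpow_one ‖phiD d z‖]
    rw [← Real.rpow_add' (norm_nonneg _) (by intro h0; linarith)]
    congr 1
    ring
  have hpt : ∀ z : Fin d → Circle, ‖psiFn p d z‖ₑ ^ qr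
      = ENNReal.ofReal (c ^ qr) * ENNReal.ofReal (‖phiD d z‖ ^ p) := by
    intro z
    rw [← ofReal_norm, hnorm z, ENNReal.ofReal_mul hc0,
      ENNReal.mul_rpow_of_nonneg _ _ hqr0.le,
      ENNReal.ofReal_rpow_of_nonneg hc0 hqr0.le,
      ENNReal.ofReal_rpow_of_nonneg (Real.rpow_nonneg (norm_nonneg _) _) hqr0.le,
      ← Real.rpow_mul (norm_nonneg _), hmul]
  simp_rw [hpt]
  have hInn : 0 ≤ ∫ z, ‖phiD d z‖ ^ p ∂muD d :=
    integral_nonneg fun z => Real.rpow_nonneg (norm_nonneg _) p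
  rw [lintegral_const_mul _
      (show Measurable fun z : Fin d → Circle => ENNReal.ofReal (‖phiD d z‖ ^ p) from
        (measurable_rpow_norm_phiD p).ennreal_ofReal),
    ← ofReal_integral_eq_lintegral_ofReal (integrable_rpow_norm_phiD hp0.le)
      (Eventually.of_forall fun z => Real.rpow_nonneg (norm_nonneg _) p),
    ENNReal.mul_rpow_of_nonneg _ _ (by positivity : (0:ℝ) ≤ 1 / qr),
    ENNReal.ofReal_rpow_of_nonneg (Real.rpow_nonneg hc0 qr) (by positivity),
    ENNReal.ofReal_rpow_of_nonneg hInn (by positivity),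
    ← ENNReal.ofReal_mul (by positivity)]
  congr 1
  have h1 : (c ^ qr) ^ (1 / qr) = c := by
    rw [← Real.rpow_mul hc0, mul_one_div, div_self (ne_of_gt hqr0), Real.rpow_one]
  have h2 : ((∫ z, ‖phiD d z‖ ^ p ∂muD d) : ℝ) ^ (1 / qr) = phiNorm p d ^ (p - 1) := by
    rw [← phiNorm_rpow hp hd, ← Real.rpow_mul (phiNorm_pos hp hd).le]
    congr 1
    rw [hqr, one_div_div, mul_comm, div_mul_cancel₀ _ (ne_of_gt hp0)]
  rw [h1, h2, hc, mul_assoc, ← Real.rpow_add (phiNorm_pos hp hd),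
    show -p + (p - 1) = -1 by ring, Real.rpow_neg_one, div_eq_mul_inv]

lemma pair_psi' (hp : 1 ≤ p) {q : ℝ≥0∞} (hq : (ENNReal.ofReal p)⁻¹ + q⁻¹ = 1)
    {ψ' : (Fin d → Circle) → ℂ} (hmem : MemLp ψ' q (muD d))
    (hcoef : ∀ k : Fin d,
      ∫ z : Fin d → Circle, ψ' z * (starRingEnd ℂ) ((z k : ℂ)) ∂muD d = 1) :
    ∫ z, ψ' z * (starRingEnd ℂ) (phiD d z) ∂muD d = (d : ℂ) := by
  have hint : ∀ k : Fin d,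
      Integrable (fun z => ψ' z * (starRingEnd ℂ) ((z k : ℂ))) (muD d) := by
    intro k
    have hgm : AEStronglyMeasurable (fun z : Fin d → Circle => (starRingEnd ℂ) ((z k : ℂ)))
        (muD d) :=
      (Complex.continuous_conj.comp
        (continuous_induced_dom.comp (continuous_apply k))).measurable.aestronglyMeasurable
    have hg : MemLp (fun z : Fin d → Circle => (starRingEnd ℂ) ((z k : ℂ)))
        (ENNReal.ofReal p) (muD d) := by
      refine MemLp.of_bound hgm 1 (Eventually.of_forall fun z => ?_)
      rw [RCLike.norm_conj]
      simp [Circle.norm_coe]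
    have hprod : MemLp ((fun z : Fin d → Circle => (starRingEnd ℂ) ((z k : ℂ))) • ψ') 1
        (muD d) :=
      haveI : ENNReal.HolderTriple (ENNReal.ofReal p) q 1 := ⟨by rw [inv_one, hq]⟩
      MemLp.smul hmem hg
    have := memLp_one_iff_integrable.mp hprod
    refine this.congr (Eventually.of_forall fun z => ?_)
    simp [Pi.smul_apply', smul_eq_mul, mul_comm]
  have hexp : ∀ z, ψ' z * (starRingEnd ℂ) (phiD d z)
      = ∑ k, ψ' z * (starRingEnd ℂ) ((z k : ℂ)) := by
    intro z; rw [phiD, map_sum, Finset.mul_sum]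
  rw [integral_congr_ae (Eventually.of_forall hexp),
    integral_finset_sum _ fun k _ => hint k]
  simp [hcoef]

end PsiAux

open scoped Classical in
/-- `‖ψ‖_{L^q(𝕋^d)} = d/‖φ‖_{L^p(𝕋^d)}`, and `ψ` has minimal `L^q` norm
among all functions whose Riesz projection equals `φ`. -/
theorem psi_norm_and_minimal (p : ℝ) (hp : 1 ≤ p) (d : ℕ) (hd : 1 ≤ d) (q : ℝ≥0∞)
    (hq : (ENNReal.ofReal p)⁻¹ + q⁻¹ = 1) :
    eLpNorm (psiFn p d) q (muD d) = ENNReal.ofReal (d / phiNorm p d) ∧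
      ∀ ψ' : (Fin d → Circle) → ℂ, MemLp ψ' q (muD d) →
        (∀ α : Fin d → ℕ,
          ∫ z : Fin d → Circle, ψ' z * (starRingEnd ℂ) (∏ j, (z j : ℂ) ^ α j) ∂muD d
            = if ∃ j : Fin d, α = Pi.single j 1 then 1 else 0) →
        eLpNorm (psiFn p d) q (muD d) ≤ eLpNorm ψ' q (muD d) := by
  have heq : eLpNorm (psiFn p d) q (muD d) = ENNReal.ofReal (d / phiNorm p d) := by
    rcases eq_or_lt_of_le hp with hp1 | hp1
    · have hq' := PsiAux.q_top_of_p_one hp1.symm hq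
      subst hq'
      exact le_antisymm (PsiAux.upper_top hp1.symm hd)
        (PsiAux.lower_bound hp hd hq PsiAux.aesm_psiFn (PsiAux.pair_psi hp hd))
    · rw [PsiAux.q_eq_of_p_gt hp1 hq] at *
      exact PsiAux.eLpNorm_psi_eq_of_gt hp1 hd
  refine ⟨heq, fun ψ' hmem hcoef => ?_⟩
  rw [heq]
  have hcoef' : ∀ k : Fin d,
      ∫ z : Fin d → Circle, ψ' z * (starRingEnd ℂ) ((z k : ℂ)) ∂muD d = 1 := by
    intro k
    have hc := hcoef (Pi.single k 1)
    have hprod : ∀ z : Fin d → Circle, (∏ j, (z j : ℂ) ^ (Pi.single k 1 j)) = (z k : ℂ) := by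
      intro z
      rw [Finset.prod_eq_single k]
      · simp
      · intro j _ hj; simp [Pi.single_apply, hj]
      · simp
    simp_rw [hprod] at hc
    rwa [if_pos ⟨k, rfl⟩] at hc
  exact PsiAux.lower_bound hp hd hq hmem.aestronglyMeasurable
    (PsiAux.pair_psi' hp hq hmem hcoef')
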